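/- arXiv:2202.04679 — 2 statements merged into one kernel-verified Lean document; each statement's English description precedes it below -/
import Mathlib

section
/- Consider the one-step finite-volume scheme for the aggregate volume fraction described in the context. Fix a time level n and cell values φ_{i-1/2}^n ∈ [0,1] for i = 1,…,N. Then for every cell index i ∈ {1,…,N}, if the CFL condition holds, the update map (a,b,c) ↦ b + (λ/A_{i-1/2}) ( a Q_{i-1}^{n+} + b Q_{i-1}^{n-} + A_{i-1}γ_{i-1} [ a ṽ(b) − (D(b) − D(a))/Δz ] − b Q_i^{n+} − c Q_i^{n-} − A_iγ_i [ b ṽ(c) − (D(c) − D(b))/Δz ] + Q_F^n φ_F^n δ_i ) is nondecreasing in each of the three arguments a, b, c on the cube [0,1]^3. In other words, the aggregate scheme is a monotone scheme under the CFL condition. -/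
set_option maxHeartbeats 1000000


/-- monotonicity of the finite-volume update map for the aggregate
volume fraction (Bürger–Diehl–Martí–Vásquez flotation scheme) under the CFL condition.
Cell values `φ_{i-1/2}` are indexed by `i = 1,…,N`; `Ab i` is the boundary area `A_i`
and `Ac i` the cell area `A_{i-1/2}`.  At a fixed time level the flows are
`QUn, QFn, QWn` and the boundary flows `Q i`; `v` is the velocity `ṽ`, `d` the
capillarity density with primitive `D`.  The update map
`K (a,b,c)` is nondecreasing in each argument on `[0,1]³`. -/
theorem stmt10
    (N iF : ℕ) (hN : 3 ≤ N) (hiF : 2 ≤ iF) (hiFN : iF ≤ N - 1)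
    (Δz Δt : ℝ) (hΔz : 0 < Δz) (hΔt : 0 < Δt)
    (Ac Ab : ℕ → ℝ)
    (hAc : ∀ i : ℕ, 1 ≤ i → i ≤ N → 0 < Ac i)
    (hAb : ∀ i : ℕ, i ≤ N → 0 < Ab i)
    (γ δ : ℕ → ℝ)
    (hγ : ∀ i : ℕ, γ i = if 1 ≤ i ∧ i ≤ N - 2 then 1 else 0)
    (hδ : ∀ i : ℕ, δ i = if i = iF then 1 else 0)
    (QUn QFn QWn : ℝ)
    (hQU : 0 ≤ QUn) (hQF : 0 ≤ QFn) (hQW : 0 ≤ QWn)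
    (hQE : 0 ≤ QFn + QWn - QUn)
    (Q : ℕ → ℝ)
    (hQlow : ∀ i : ℕ, i ≤ iF - 1 → Q i = -QUn)
    (hQmid : ∀ i : ℕ, iF ≤ i → i ≤ N - 2 → Q i = QFn - QUn)
    (hQtop : ∀ i : ℕ, N - 1 ≤ i → i ≤ N → Q i = QFn + QWn - QUn)
    (φc : ℝ) (hφc : φc ∈ Set.Ioo (0:ℝ) 1)
    (v : ℝ → ℝ) (Lv vmax : ℝ)
    (hv0 : ∀ u ∈ Set.Icc (0:ℝ) 1, 0 ≤ v u)
    (hvmax : ∀ u ∈ Set.Icc (0:ℝ) 1, v u ≤ vmax)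
    (hvmono : ∀ u₁ ∈ Set.Icc (0:ℝ) 1, ∀ u₂ ∈ Set.Icc (0:ℝ) 1, u₁ ≤ u₂ → v u₂ ≤ v u₁)
    (hvlip : ∀ u₁ ∈ Set.Icc (0:ℝ) 1, ∀ u₂ ∈ Set.Icc (0:ℝ) 1,
      |v u₁ - v u₂| ≤ Lv * |u₁ - u₂|)
    (hv1 : v 1 = 0)
    (d : ℝ → ℝ) (dmax : ℝ) (hdmeas : Measurable d)
    (hd : ∀ s ∈ Set.Icc (0:ℝ) 1, 0 ≤ d s ∧ d s ≤ dmax)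
    (hd0 : ∀ s ∈ Set.Icc (0:ℝ) φc, d s = 0)
    (D : ℝ → ℝ) (hD : ∀ x : ℝ, D x = ∫ s in (0:ℝ)..x, d s)
    (M1 M2 Amin Qbound : ℝ)
    (hM1 : ∀ i : ℕ, 1 ≤ i → i ≤ N → Ab (i - 1) / Ac i ≤ M1 ∧ Ab i / Ac i ≤ M1)
    (hM2 : ∀ i : ℕ, 1 ≤ i → i ≤ N → (Ab (i - 1) + Ab i) / Ac i ≤ M2)
    (hAmin : 0 < Amin)
    (hAminc : ∀ i : ℕ, 1 ≤ i → i ≤ N → Amin ≤ Ac i)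
    (hAminb : ∀ i : ℕ, i ≤ N → Amin ≤ Ab i)
    (hQbound : QFn + QWn ≤ Qbound)
    (hCFL : Δt * (2 * Qbound / Amin + M1 * Lv + M1 * vmax + M2 * dmax / Δz) ≤ Δz)
    (φF : ℝ) (hφF : φF ∈ Set.Icc (0:ℝ) 1)
    (K : ℕ → ℝ → ℝ → ℝ → ℝ)
    (hK : ∀ (i : ℕ) (a b c : ℝ), K i a b c =
      b + (Δt / Δz) / Ac i *
        (a * max (Q (i - 1)) 0 + b * min (Q (i - 1)) 0
          + Ab (i - 1) * γ (i - 1) * (a * v b - (D b - D a) / Δz)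
          - b * max (Q i) 0 - c * min (Q i) 0
          - Ab i * γ i * (b * v c - (D c - D b) / Δz)
          + QFn * φF * δ i)) :
    ∀ i : ℕ, 1 ≤ i → i ≤ N →
      (∀ b ∈ Set.Icc (0:ℝ) 1, ∀ c ∈ Set.Icc (0:ℝ) 1,
        ∀ a₁ ∈ Set.Icc (0:ℝ) 1, ∀ a₂ ∈ Set.Icc (0:ℝ) 1,
          a₁ ≤ a₂ → K i a₁ b c ≤ K i a₂ b c) ∧
      (∀ a ∈ Set.Icc (0:ℝ) 1, ∀ c ∈ Set.Icc (0:ℝ) 1,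
        ∀ b₁ ∈ Set.Icc (0:ℝ) 1, ∀ b₂ ∈ Set.Icc (0:ℝ) 1,
          b₁ ≤ b₂ → K i a b₁ c ≤ K i a b₂ c) ∧
      (∀ a ∈ Set.Icc (0:ℝ) 1, ∀ b ∈ Set.Icc (0:ℝ) 1,
        ∀ c₁ ∈ Set.Icc (0:ℝ) 1, ∀ c₂ ∈ Set.Icc (0:ℝ) 1,
          c₁ ≤ c₂ → K i a b c₁ ≤ K i a b c₂) := by
  intro i hi1 hiN
  have hi1N : (i:ℕ) - 1 ≤ N := by omega
  have hAci := hAc i hi1 hiN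
  have hμ : 0 ≤ (Δt / Δz) / Ac i := div_nonneg (div_nonneg hΔt.le hΔz.le) hAci.le
  have hγn : ∀ j : ℕ, 0 ≤ γ j ∧ γ j ≤ 1 := by
    intro j; rw [hγ]; split <;> norm_num
  have hB : 0 ≤ Ab (i - 1) * γ (i - 1) :=
    mul_nonneg (hAb (i - 1) hi1N).le (hγn (i - 1)).1
  have hC : 0 ≤ Ab i * γ i := mul_nonneg (hAb i hiN).le (hγn i).1
  -- integrability of d on subintervals of [0,1]
  have hint : ∀ x y : ℝ, 0 ≤ x → y ≤ 1 → x ≤ y →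
      IntervalIntegrable d MeasureTheory.volume x y := by
    intro x y hx hy hxy
    rw [intervalIntegrable_iff_integrableOn_Ioc_of_le hxy]
    apply MeasureTheory.Measure.integrableOn_of_bounded (M := dmax)
    · exact (measure_Ioc_lt_top).ne
    · exact hdmeas.aestronglyMeasurable
    · filter_upwards [MeasureTheory.ae_restrict_mem measurableSet_Ioc] with s hs
      have hs' : s ∈ Set.Icc (0:ℝ) 1 := ⟨le_trans hx hs.1.le, le_trans hs.2 hy⟩
      have hds := hd s hs'
      rw [Real.norm_eq_abs, abs_of_nonneg hds.1]; exact hds.2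
  -- key monotonicity/bound for D
  have hDkey : ∀ x y : ℝ, 0 ≤ x → x ≤ y → y ≤ 1 →
      0 ≤ D y - D x ∧ D y - D x ≤ dmax * (y - x) := by
    intro x y hx hxy hy
    have h1 := hint 0 x le_rfl (le_trans hxy hy) hx
    have h2 := hint x y hx hy hxy
    have hadd := intervalIntegral.integral_add_adjacent_intervals h1 h2
    have hDyx : D y - D x = ∫ s in x..y, d s := by
      rw [hD, hD]; linarith [hadd]
    constructor
    · rw [hDyx]
      apply intervalIntegral.integral_nonneg hxy
      intro u hu; exact (hd u ⟨le_trans hx hu.1, le_trans hu.2 hy⟩).1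
    · rw [hDyx]
      calc (∫ s in x..y, d s) ≤ ∫ _s in x..y, dmax :=
            intervalIntegral.integral_mono_on hxy h2 intervalIntegrable_const
              (fun u hu => (hd u ⟨le_trans hx hu.1, le_trans hu.2 hy⟩).2)
        _ = dmax * (y - x) := by
            rw [intervalIntegral.integral_const, smul_eq_mul]; ring
  have hQb0 : 0 ≤ Qbound := by linarith
  have hQb : ∀ j : ℕ, j ≤ N → -Qbound ≤ Q j ∧ Q j ≤ Qbound := by
    intro j hj
    rcases lt_or_ge j iF with h | h
    · rw [hQlow j (by omega)]; constructor <;> linarith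
    · rcases lt_or_ge j (N - 1) with h2 | h2
      · rw [hQmid j h (by omega)]; constructor <;> linarith
      · rw [hQtop j h2 hj]; constructor <;> linarith
  have hLv : 0 ≤ Lv := by
    have h := hvlip 0 (by constructor <;> norm_num) 1 (by constructor <;> norm_num)
    have h2 : |(0:ℝ) - 1| = 1 := by norm_num
    rw [h2, mul_one] at h
    exact le_trans (abs_nonneg _) h
  have hvmax0 : 0 ≤ vmax :=
    le_trans (hv0 0 (by constructor <;> norm_num)) (hvmax 0 (by constructor <;> norm_num))
  have hdmax0 : 0 ≤ dmax :=
    le_trans (hd 0 (by constructor <;> norm_num)).1 (hd 0 (by constructor <;> norm_num)).2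
  have hBle : Ab (i - 1) * γ (i - 1) ≤ M1 * Ac i := by
    have h := (hM1 i hi1 hiN).1
    have hAb' : Ab (i - 1) ≤ M1 * Ac i := (div_le_iff₀ hAci).1 h
    calc Ab (i - 1) * γ (i - 1) ≤ Ab (i - 1) * 1 :=
          mul_le_mul_of_nonneg_left (hγn (i - 1)).2 (hAb (i - 1) hi1N).le
      _ = Ab (i - 1) := mul_one _
      _ ≤ M1 * Ac i := hAb'
  have hCle : Ab i * γ i ≤ M1 * Ac i := by
    have h := (hM1 i hi1 hiN).2
    have hAb' : Ab i ≤ M1 * Ac i := (div_le_iff₀ hAci).1 h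
    calc Ab i * γ i ≤ Ab i * 1 :=
          mul_le_mul_of_nonneg_left (hγn i).2 (hAb i hiN).le
      _ = Ab i := mul_one _
      _ ≤ M1 * Ac i := hAb'
  have hBCle : Ab (i - 1) * γ (i - 1) + Ab i * γ i ≤ M2 * Ac i := by
    have h := hM2 i hi1 hiN
    have hAb' : Ab (i - 1) + Ab i ≤ M2 * Ac i := (div_le_iff₀ hAci).1 h
    have h1 : Ab (i - 1) * γ (i - 1) ≤ Ab (i - 1) := by
      nlinarith [(hγn (i - 1)).2, (hAb (i - 1) hi1N).le]
    have h2 : Ab i * γ i ≤ Ab i := by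
      nlinarith [(hγn i).2, (hAb i hiN).le]
    linarith
  refine ⟨?_, ?_, ?_⟩
  · -- monotone in a
    intro b hb c hc a₁ ha₁ a₂ ha₂ h12
    have hDa := hDkey a₁ a₂ ha₁.1 h12 ha₂.2
    have expand : K i a₂ b c - K i a₁ b c =
        (Δt / Δz) / Ac i * ((a₂ - a₁) * max (Q (i - 1)) 0
          + Ab (i - 1) * γ (i - 1) * ((a₂ - a₁) * v b + (D a₂ - D a₁) / Δz)) := by
      rw [hK, hK]; ring
    have h0 : 0 ≤ (Δt / Δz) / Ac i * ((a₂ - a₁) * max (Q (i - 1)) 0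
          + Ab (i - 1) * γ (i - 1) * ((a₂ - a₁) * v b + (D a₂ - D a₁) / Δz)) :=
      mul_nonneg hμ (add_nonneg
        (mul_nonneg (by linarith) (le_max_right _ _))
        (mul_nonneg hB (add_nonneg (mul_nonneg (by linarith) (hv0 b hb))
          (div_nonneg hDa.1 hΔz.le))))
    linarith
  · -- monotone in b (the CFL part)
    intro a ha c hc b₁ hb₁ b₂ hb₂ h12
    have he : 0 ≤ b₂ - b₁ := by linarith
    have hDb := hDkey b₁ b₂ hb₁.1 h12 hb₂.2
    have hvm := hvmono b₁ hb₁ b₂ hb₂ h12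
    have hlip : v b₁ - v b₂ ≤ Lv * (b₂ - b₁) := by
      have h := hvlip b₁ hb₁ b₂ hb₂
      have habs : |b₁ - b₂| = b₂ - b₁ := by rw [abs_sub_comm, abs_of_nonneg he]
      calc v b₁ - v b₂ ≤ |v b₁ - v b₂| := le_abs_self _
        _ ≤ Lv * |b₁ - b₂| := h
        _ = Lv * (b₂ - b₁) := by rw [habs]
    have hQ1 := hQb (i - 1) hi1N
    have hQ2 := hQb i hiN
    have hmin : -Qbound ≤ min (Q (i - 1)) 0 := le_min hQ1.1 (by linarith)
    have hmax : max (Q i) 0 ≤ Qbound := max_le hQ2.2 hQb0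
    have expand : K i a b₂ c - K i a b₁ c = (b₂ - b₁) + (Δt / Δz) / Ac i *
        ((b₂ - b₁) * min (Q (i - 1)) 0
          + Ab (i - 1) * γ (i - 1) * (a * (v b₂ - v b₁))
          - Ab (i - 1) * γ (i - 1) * ((D b₂ - D b₁) / Δz)
          - (b₂ - b₁) * max (Q i) 0
          - Ab i * γ i * ((b₂ - b₁) * v c)
          - Ab i * γ i * ((D b₂ - D b₁) / Δz)) := by
      rw [hK, hK]; ring
    -- termwise lower bounds
    have h1 : -((b₂ - b₁) * Qbound) ≤ (b₂ - b₁) * min (Q (i - 1)) 0 := by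
      linarith [mul_nonneg he (by linarith : (0:ℝ) ≤ min (Q (i - 1)) 0 + Qbound)]
    have hax : -(Lv * (b₂ - b₁)) ≤ a * (v b₂ - v b₁) := by
      have h' : v b₂ - v b₁ ≤ a * (v b₂ - v b₁) := by
        linarith [mul_nonneg (by linarith [ha.2] : (0:ℝ) ≤ 1 - a)
          (by linarith : (0:ℝ) ≤ v b₁ - v b₂)]
      linarith
    have h2 : -(Ab (i - 1) * γ (i - 1) * (Lv * (b₂ - b₁)))
        ≤ Ab (i - 1) * γ (i - 1) * (a * (v b₂ - v b₁)) := by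
      have := mul_le_mul_of_nonneg_left hax hB
      linarith [this]
    have h3 : Ab (i - 1) * γ (i - 1) * ((D b₂ - D b₁) / Δz)
        ≤ Ab (i - 1) * γ (i - 1) * ((dmax * (b₂ - b₁)) / Δz) :=
      mul_le_mul_of_nonneg_left ((div_le_div_iff_of_pos_right hΔz).2 hDb.2) hB
    have h4 : (b₂ - b₁) * max (Q i) 0 ≤ (b₂ - b₁) * Qbound :=
      mul_le_mul_of_nonneg_left hmax he
    have h5 : Ab i * γ i * ((b₂ - b₁) * v c) ≤ Ab i * γ i * ((b₂ - b₁) * vmax) :=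
      mul_le_mul_of_nonneg_left (mul_le_mul_of_nonneg_left (hvmax c hc) he) hC
    have h6 : Ab i * γ i * ((D b₂ - D b₁) / Δz)
        ≤ Ab i * γ i * ((dmax * (b₂ - b₁)) / Δz) :=
      mul_le_mul_of_nonneg_left ((div_le_div_iff_of_pos_right hΔz).2 hDb.2) hC
    -- bound of the negative part by CFL quantity
    have p1 : (b₂ - b₁) * (2 * Qbound) ≤ (b₂ - b₁) * (Ac i * (2 * Qbound / Amin)) := by
      have base : 2 * Qbound ≤ Ac i * (2 * Qbound / Amin) := by
        rw [mul_div_assoc', le_div_iff₀ hAmin]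
        linarith [mul_nonneg hQb0 (sub_nonneg.2 (hAminc i hi1 hiN))]
      exact mul_le_mul_of_nonneg_left base he
    have p2 : Ab (i - 1) * γ (i - 1) * (Lv * (b₂ - b₁))
        ≤ M1 * Ac i * (Lv * (b₂ - b₁)) :=
      mul_le_mul_of_nonneg_right hBle (mul_nonneg hLv he)
    have p3 : Ab i * γ i * ((b₂ - b₁) * vmax) ≤ M1 * Ac i * ((b₂ - b₁) * vmax) :=
      mul_le_mul_of_nonneg_right hCle (mul_nonneg he hvmax0)
    have p4 : (Ab (i - 1) * γ (i - 1) + Ab i * γ i) * ((dmax * (b₂ - b₁)) / Δz)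
        ≤ M2 * Ac i * ((dmax * (b₂ - b₁)) / Δz) :=
      mul_le_mul_of_nonneg_right hBCle (div_nonneg (mul_nonneg hdmax0 he) hΔz.le)
    -- assemble: the bracket R satisfies R ≥ -(b₂-b₁)·Ac i·T with Δt·T ≤ Δz
    have hμT : (Δt / Δz) / Ac i * ((b₂ - b₁) * (Ac i *
        (2 * Qbound / Amin + M1 * Lv + M1 * vmax + M2 * dmax / Δz)))
        ≤ (b₂ - b₁) := by
      have hcancel : (Δt / Δz) / Ac i * ((b₂ - b₁) * (Ac i *
          (2 * Qbound / Amin + M1 * Lv + M1 * vmax + M2 * dmax / Δz)))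
          = (b₂ - b₁) * (Δt *
          (2 * Qbound / Amin + M1 * Lv + M1 * vmax + M2 * dmax / Δz)) / Δz := by
        field_simp
      rw [hcancel, div_le_iff₀ hΔz]
      linarith [mul_le_mul_of_nonneg_left hCFL he]
    have hZ : (b₂ - b₁) * (2 * Qbound)
        + Ab (i - 1) * γ (i - 1) * (Lv * (b₂ - b₁))
        + Ab i * γ i * ((b₂ - b₁) * vmax)
        + (Ab (i - 1) * γ (i - 1) + Ab i * γ i) * ((dmax * (b₂ - b₁)) / Δz)
        ≤ (b₂ - b₁) * (Ac i *
          (2 * Qbound / Amin + M1 * Lv + M1 * vmax + M2 * dmax / Δz)) := by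
      ring_nf at p1 p2 p3 p4 ⊢
      linarith [p1, p2, p3, p4]
    have hRZ : -((b₂ - b₁) * (2 * Qbound)
        + Ab (i - 1) * γ (i - 1) * (Lv * (b₂ - b₁))
        + Ab i * γ i * ((b₂ - b₁) * vmax)
        + (Ab (i - 1) * γ (i - 1) + Ab i * γ i) * ((dmax * (b₂ - b₁)) / Δz))
        ≤ ((b₂ - b₁) * min (Q (i - 1)) 0
          + Ab (i - 1) * γ (i - 1) * (a * (v b₂ - v b₁))
          - Ab (i - 1) * γ (i - 1) * ((D b₂ - D b₁) / Δz)
          - (b₂ - b₁) * max (Q i) 0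
          - Ab i * γ i * ((b₂ - b₁) * v c)
          - Ab i * γ i * ((D b₂ - D b₁) / Δz)) := by
      linarith [h1, h2, h3, h4, h5, h6]
    have hfinal : -(b₂ - b₁) ≤ (Δt / Δz) / Ac i *
        ((b₂ - b₁) * min (Q (i - 1)) 0
          + Ab (i - 1) * γ (i - 1) * (a * (v b₂ - v b₁))
          - Ab (i - 1) * γ (i - 1) * ((D b₂ - D b₁) / Δz)
          - (b₂ - b₁) * max (Q i) 0
          - Ab i * γ i * ((b₂ - b₁) * v c)
          - Ab i * γ i * ((D b₂ - D b₁) / Δz)) := by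
      have m1 := mul_le_mul_of_nonneg_left hRZ hμ
      have m2 := mul_le_mul_of_nonneg_left hZ hμ
      linarith [m1, m2, hμT]
    linarith [expand, hfinal]
  · -- monotone in c
    intro a ha b hb c₁ hc₁ c₂ hc₂ h12
    have hDc := hDkey c₁ c₂ hc₁.1 h12 hc₂.2
    have hvm := hvmono c₁ hc₁ c₂ hc₂ h12
    have expand : K i a b c₂ - K i a b c₁ =
        (Δt / Δz) / Ac i * ((c₂ - c₁) * (-(min (Q i) 0))
          + Ab i * γ i * (b * (v c₁ - v c₂) + (D c₂ - D c₁) / Δz)) := by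
      rw [hK, hK]; ring
    have h0 : 0 ≤ (Δt / Δz) / Ac i * ((c₂ - c₁) * (-(min (Q i) 0))
          + Ab i * γ i * (b * (v c₁ - v c₂) + (D c₂ - D c₁) / Δz)) :=
      mul_nonneg hμ (add_nonneg
        (mul_nonneg (by linarith) (neg_nonneg.2 (min_le_right _ _)))
        (mul_nonneg hC (add_nonneg (mul_nonneg hb.1 (by linarith))
          (div_nonneg hDc.1 hΔz.le))))
    linarith
end

section
/- Consider the one-step finite-volume scheme for the aggregate volume fraction described in the context, with the ghost convention φ_{−1/2}^n := 0 and φ_{N+1/2}^n := 0, numerical fluxes A_iΦ_i^n := φ_{i−1/2}^n Q_i^{n+} + φ_{i+1/2}^n Q_i^{n−} + A_iγ_i [ φ_{i−1/2}^n ṽ(φ_{i+1/2}^n) − (D(φ_{i+1/2}^n) − D(φ_{i−1/2}^n))/Δz ] for i = 0,…,N, and update φ_{i−1/2}^{n+1} := φ_{i−1/2}^n + (λ/A_{i−1/2}) ( A_{i−1}Φ_{i−1}^n − A_iΦ_i^n + Q_F^n φ_F^n δ_i ) for i = 1,…,N. If the CFL condition holds, φ_F^n ∈ [0,1] for all n,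 and the initial values satisfy 0 ≤ φ_{i−1/2}^0 ≤ 1 for all i = 1,…,N, then for every time level n ≥ 0 and every i = 1,…,N one has 0 ≤ φ_{i−1/2}^n ≤ 1. -/
set_option maxHeartbeats 1600000


/-- invariant region `0 ≤ φ ≤ 1` for the finite-volume scheme for the
aggregate volume fraction (Bürger–Diehl–Martí–Vásquez flotation scheme) under the CFL
condition.  Cell values `φ_{i-1/2}^n` are stored as `φ n i` for `i = 1,…,N`, with ghost
values `φ n 0 = φ n (N+1) = 0`; `Ab i` is the boundary area `A_i` and `Ac i` the cell
area `A_{i-1/2}`. -/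
theorem stmt11
    (N iF : ℕ) (hN : 3 ≤ N) (hiF : 2 ≤ iF) (hiFN : iF ≤ N - 1)
    (Δz Δt : ℝ) (hΔz : 0 < Δz) (hΔt : 0 < Δt)
    (Ac Ab : ℕ → ℝ)
    (hAc : ∀ i : ℕ, 1 ≤ i → i ≤ N → 0 < Ac i)
    (hAb : ∀ i : ℕ, i ≤ N → 0 < Ab i)
    (γ δ : ℕ → ℝ)
    (hγ : ∀ i : ℕ, γ i = if 1 ≤ i ∧ i ≤ N - 2 then 1 else 0)
    (hδ : ∀ i : ℕ, δ i = if i = iF then 1 else 0)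
    (QU QF QW : ℕ → ℝ)
    (hQU : ∀ n : ℕ, 0 ≤ QU n) (hQF : ∀ n : ℕ, 0 ≤ QF n) (hQW : ∀ n : ℕ, 0 ≤ QW n)
    (hQE : ∀ n : ℕ, 0 ≤ QF n + QW n - QU n)
    (Q : ℕ → ℕ → ℝ)
    (hQlow : ∀ (n i : ℕ), i ≤ iF - 1 → Q n i = -QU n)
    (hQmid : ∀ (n i : ℕ), iF ≤ i → i ≤ N - 2 → Q n i = QF n - QU n)
    (hQtop : ∀ (n i : ℕ), N - 1 ≤ i → i ≤ N → Q n i = QF n + QW n - QU n)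
    (φc : ℝ) (hφc : φc ∈ Set.Ioo (0:ℝ) 1)
    (v : ℝ → ℝ) (Lv vmax : ℝ)
    (hv0 : ∀ u ∈ Set.Icc (0:ℝ) 1, 0 ≤ v u)
    (hvmax : ∀ u ∈ Set.Icc (0:ℝ) 1, v u ≤ vmax)
    (hvmono : ∀ u₁ ∈ Set.Icc (0:ℝ) 1, ∀ u₂ ∈ Set.Icc (0:ℝ) 1, u₁ ≤ u₂ → v u₂ ≤ v u₁)
    (hvlip : ∀ u₁ ∈ Set.Icc (0:ℝ) 1, ∀ u₂ ∈ Set.Icc (0:ℝ) 1,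
      |v u₁ - v u₂| ≤ Lv * |u₁ - u₂|)
    (hv1 : v 1 = 0)
    (d : ℝ → ℝ) (dmax : ℝ) (hdmeas : Measurable d)
    (hd : ∀ s ∈ Set.Icc (0:ℝ) 1, 0 ≤ d s ∧ d s ≤ dmax)
    (hd0 : ∀ s ∈ Set.Icc (0:ℝ) φc, d s = 0)
    (D : ℝ → ℝ) (hD : ∀ x : ℝ, D x = ∫ s in (0:ℝ)..x, d s)
    (M1 M2 Amin Qbound : ℝ)
    (hM1 : ∀ i : ℕ, 1 ≤ i → i ≤ N → Ab (i - 1) / Ac i ≤ M1 ∧ Ab i / Ac i ≤ M1)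
    (hM2 : ∀ i : ℕ, 1 ≤ i → i ≤ N → (Ab (i - 1) + Ab i) / Ac i ≤ M2)
    (hAmin : 0 < Amin)
    (hAminc : ∀ i : ℕ, 1 ≤ i → i ≤ N → Amin ≤ Ac i)
    (hAminb : ∀ i : ℕ, i ≤ N → Amin ≤ Ab i)
    (hQbound : ∀ n : ℕ, QF n + QW n ≤ Qbound)
    (hCFL : Δt * (2 * Qbound / Amin + M1 * Lv + M1 * vmax + M2 * dmax / Δz) ≤ Δz)
    (φF : ℕ → ℝ) (hφF : ∀ n : ℕ, φF n ∈ Set.Icc (0:ℝ) 1)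
    (φ : ℕ → ℕ → ℝ)
    (hghost0 : ∀ n : ℕ, φ n 0 = 0) (hghostN : ∀ n : ℕ, φ n (N + 1) = 0)
    (hupdate : ∀ (n i : ℕ), 1 ≤ i → i ≤ N →
      φ (n + 1) i = φ n i + (Δt / Δz) / Ac i *
        ((φ n (i - 1) * max (Q n (i - 1)) 0 + φ n i * min (Q n (i - 1)) 0
            + Ab (i - 1) * γ (i - 1) *
              (φ n (i - 1) * v (φ n i) - (D (φ n i) - D (φ n (i - 1))) / Δz))
          - (φ n i * max (Q n i) 0 + φ n (i + 1) * min (Q n i) 0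
            + Ab i * γ i *
              (φ n i * v (φ n (i + 1)) - (D (φ n (i + 1)) - D (φ n i)) / Δz))
          + QF n * φF n * δ i))
    (hinit : ∀ i : ℕ, 1 ≤ i → i ≤ N → φ 0 i ∈ Set.Icc (0:ℝ) 1) :
    ∀ (n i : ℕ), 1 ≤ i → i ≤ N → φ n i ∈ Set.Icc (0:ℝ) 1 := by
  -- basic scalar facts
  have hQb0 : (0:ℝ) ≤ Qbound := le_trans (add_nonneg (hQF 0) (hQW 0)) (hQbound 0)
  have h01 : (0:ℝ) ∈ Set.Icc (0:ℝ) 1 := by norm_num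
  have h11 : (1:ℝ) ∈ Set.Icc (0:ℝ) 1 := by norm_num
  have hvmax0 : (0:ℝ) ≤ vmax := le_trans (hv0 0 h01) (hvmax 0 h01)
  have hdmax0 : (0:ℝ) ≤ dmax := le_trans (hd 0 h01).1 (hd 0 h01).2
  have hLv0 : (0:ℝ) ≤ Lv := by
    have h := hvlip 0 h01 1 h11
    rw [hv1, sub_zero] at h
    have h2 : |(0:ℝ) - 1| = 1 := by norm_num
    rw [h2, mul_one] at h
    exact le_trans (abs_nonneg _) h
  have hM10 : (0:ℝ) ≤ M1 := by
    have h := (hM1 1 le_rfl (by omega)).2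
    have hb1 := hAb 1 (by omega)
    have hc1 := hAc 1 le_rfl (by omega)
    exact le_trans (le_of_lt (div_pos hb1 hc1)) h
  have hγ01 : ∀ j : ℕ, 0 ≤ γ j ∧ γ j ≤ 1 := by
    intro j; rw [hγ j]; split <;> norm_num
  -- integrability of d on [0,1]
  have hd_int : MeasureTheory.IntegrableOn d (Set.Icc (0:ℝ) 1) := by
    refine MeasureTheory.Integrable.mono' (g := fun _ => dmax) ?_ ?_ ?_
    · exact MeasureTheory.integrableOn_const measure_Icc_lt_top.ne
    · exact hdmeas.aestronglyMeasurable.restrict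
    · filter_upwards [MeasureTheory.ae_restrict_mem measurableSet_Icc] with s hs
      rw [Real.norm_eq_abs, abs_of_nonneg (hd s hs).1]
      exact (hd s hs).2
  have hii : ∀ x y : ℝ, 0 ≤ x → 0 ≤ y → x ≤ 1 → y ≤ 1 →
      IntervalIntegrable d MeasureTheory.volume x y := by
    intro x y hx0 hy0 hx1 hy1
    rw [intervalIntegrable_iff]
    refine hd_int.mono_set ?_
    intro s hs
    rcases Set.mem_uIoc.mp hs with ⟨h1, h2⟩ | ⟨h1, h2⟩
    · exact ⟨by linarith, by linarith⟩
    · exact ⟨by linarith, by linarith⟩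
  have hD0 : D 0 = 0 := by rw [hD]; exact intervalIntegral.integral_same
  have hDfact : ∀ x y : ℝ, 0 ≤ x → x ≤ y → y ≤ 1 →
      0 ≤ D y - D x ∧ D y - D x ≤ dmax * (y - x) := by
    intro x y hx hxy hy
    have hx1 : x ≤ 1 := hxy.trans hy
    have hy0 : 0 ≤ y := hx.trans hxy
    have heq : D y - D x = ∫ s in x..y, d s := by
      rw [hD, hD]
      exact intervalIntegral.integral_interval_sub_left
        (hii 0 y le_rfl hy0 zero_le_one hy) (hii 0 x le_rfl hx zero_le_one hx1)
    constructor
    · rw [heq]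
      apply intervalIntegral.integral_nonneg hxy
      intro u hu
      exact (hd u ⟨hx.trans hu.1, hu.2.trans hy⟩).1
    · rw [heq]
      have h1 : (∫ s in x..y, d s) ≤ ∫ s in x..y, dmax := by
        apply intervalIntegral.integral_mono_on hxy (hii x y hx hy0 hx1 hy)
          intervalIntegrable_const
        intro u hu
        exact (hd u ⟨hx.trans hu.1, hu.2.trans hy⟩).2
      rw [intervalIntegral.integral_const, smul_eq_mul] at h1
      linarith
  -- flow bounds
  have hQrange : ∀ (n j : ℕ), j ≤ N → -Qbound ≤ Q n j ∧ Q n j ≤ Qbound := by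
    intro n j hj
    have hb := hQbound n; have hE := hQE n; have hU := hQU n
    have hF := hQF n; have hW := hQW n
    by_cases h1 : j ≤ iF - 1
    · rw [hQlow n j h1]; constructor <;> linarith
    · by_cases h2 : j ≤ N - 2
      · rw [hQmid n j (by omega) h2]; constructor <;> linarith
      · rw [hQtop n j (by omega) hj]; constructor <;> linarith
  -- flux difference + source is nonpositive
  have hflux : ∀ (n i : ℕ), 1 ≤ i → i ≤ N →
      Q n (i - 1) - Q n i + QF n * φF n * δ i ≤ 0 := by
    intro n i hi1 hiN
    have hFφ : QF n * φF n ≤ QF n := mul_le_of_le_one_right (hQF n) (hφF n).2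
    have hFφ0 : 0 ≤ QF n * φF n := mul_nonneg (hQF n) (hφF n).1
    by_cases h1 : i ≤ iF - 1
    · rw [hQlow n (i-1) (by omega), hQlow n i h1, hδ i, if_neg (by omega)]
      linarith [hQU n]
    · by_cases h2 : i = iF
      · subst h2
        rw [hδ i, if_pos rfl, mul_one, hQlow n (i - 1) (by omega)]
        by_cases h3 : i ≤ N - 2
        · rw [hQmid n i le_rfl h3]; linarith
        · rw [hQtop n i (by omega) (by omega)]; linarith [hQW n]
      · rw [hδ i, if_neg h2, mul_zero, add_zero]
        by_cases h3 : i ≤ N - 2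
        · rw [hQmid n (i-1) (by omega) (by omega), hQmid n i (by omega) h3]
          linarith
        · by_cases h4 : i ≤ N - 1
          · rw [hQmid n (i-1) (by omega) (by omega), hQtop n i (by omega) hiN]
            linarith [hQW n]
          · rw [hQtop n (i-1) (by omega) (by omega), hQtop n i (by omega) hiN]
            linarith
  -- main induction
  intro n
  induction n with
  | zero => exact hinit
  | succ n ih =>
    intro i hi1 hiN
    have hbox : ∀ j : ℕ, j ≤ N + 1 → φ n j ∈ Set.Icc (0:ℝ) 1 := by
      intro j hj
      rcases Nat.eq_zero_or_pos j with h0 | hp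
      · subst h0; rw [hghost0 n]; exact h01
      · by_cases hjN : j ≤ N
        · exact ih j hp hjN
        · have hj1 : j = N + 1 := by omega
          subst hj1; rw [hghostN n]; exact h01
    have hup := hupdate n i hi1 hiN
    obtain ⟨ha0, ha1⟩ := Set.mem_Icc.mp (hbox (i-1) (by omega))
    obtain ⟨hb0, hb1⟩ := Set.mem_Icc.mp (hbox i (by omega))
    obtain ⟨hc0, hc1⟩ := Set.mem_Icc.mp (hbox (i+1) (by omega))
    set a := φ n (i - 1) with ha_def
    set b := φ n i with hb_def
    set c := φ n (i + 1) with hc_def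
    have hQr0 := hQrange n (i-1) (by omega)
    have hQr1 := hQrange n i hiN
    set Qp0 := max (Q n (i - 1)) 0 with hQp0_def
    set Qm0 := min (Q n (i - 1)) 0 with hQm0_def
    set Qp1 := max (Q n i) 0 with hQp1_def
    set Qm1 := min (Q n i) 0 with hQm1_def
    have hQp0a : 0 ≤ Qp0 := le_max_right _ _
    have hQp0b : Qp0 ≤ Qbound := max_le hQr0.2 hQb0
    have hQm0a : Qm0 ≤ 0 := min_le_right _ _
    have hQm0b : -Qbound ≤ Qm0 := le_min hQr0.1 (by linarith only [hQb0])
    have hQp1a : 0 ≤ Qp1 := le_max_right _ _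
    have hQp1b : Qp1 ≤ Qbound := max_le hQr1.2 hQb0
    have hQm1a : Qm1 ≤ 0 := min_le_right _ _
    have hQm1b : -Qbound ≤ Qm1 := le_min hQr1.1 (by linarith only [hQb0])
    have hm0 : Qp0 + Qm0 = Q n (i-1) := by
      rw [hQp0_def, hQm0_def, max_add_min, add_zero]
    have hm1 : Qp1 + Qm1 = Q n i := by
      rw [hQp1_def, hQm1_def, max_add_min, add_zero]
    have hAb0 := hAb (i-1) (by omega)
    have hAb1 := hAb i (by omega)
    have hAci := hAc i hi1 hiN
    set B0 := Ab (i - 1) * γ (i - 1) with hB0_def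
    set B1 := Ab i * γ i with hB1_def
    have hB0a : 0 ≤ B0 := mul_nonneg hAb0.le (hγ01 (i-1)).1
    have hB0b : B0 ≤ Ab (i-1) := mul_le_of_le_one_right hAb0.le (hγ01 (i-1)).2
    have hB1a : 0 ≤ B1 := mul_nonneg hAb1.le (hγ01 i).1
    have hB1b : B1 ≤ Ab i := mul_le_of_le_one_right hAb1.le (hγ01 i).2
    -- v facts
    have hbmem : b ∈ Set.Icc (0:ℝ) 1 := Set.mem_Icc.mpr ⟨hb0, hb1⟩
    have hcmem : c ∈ Set.Icc (0:ℝ) 1 := Set.mem_Icc.mpr ⟨hc0, hc1⟩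
    have hvb0 : 0 ≤ v b := hv0 b hbmem
    have hvbmax : v b ≤ vmax := hvmax b hbmem
    have hvc0 : 0 ≤ v c := hv0 c hcmem
    have hvcmax : v c ≤ vmax := hvmax c hcmem
    have hvbLip : v b ≤ Lv * (1 - b) := by
      have h := hvlip b hbmem 1 h11
      rw [hv1, sub_zero, abs_of_nonneg hvb0,
        abs_of_nonpos (by linarith only [hb1] : b - 1 ≤ 0)] at h
      linarith only [h]
    -- D facts
    have hDa0 : 0 ≤ D a := by
      have h := (hDfact 0 a le_rfl ha0 ha1).1; rw [hD0] at h; linarith only [h]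
    have hDb0 : 0 ≤ D b := by
      have h := (hDfact 0 b le_rfl hb0 hb1).1; rw [hD0] at h; linarith only [h]
    have hDc0 : 0 ≤ D c := by
      have h := (hDfact 0 c le_rfl hc0 hc1).1; rw [hD0] at h; linarith only [h]
    have hDbu : D b ≤ dmax * b := by
      have h := (hDfact 0 b le_rfl hb0 hb1).2; rw [hD0] at h; linarith only [h]
    have hDab : D a - D b ≤ dmax * (1 - b) := by
      have h1 := (hDfact a 1 ha0 ha1 le_rfl).1
      have h2 := (hDfact b 1 hb0 hb1 le_rfl).2
      linarith only [h1, h2]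
    have hDcb : D c - D b ≤ dmax * (1 - b) := by
      have h1 := (hDfact c 1 hc0 hc1 le_rfl).1
      have h2 := (hDfact b 1 hb0 hb1 le_rfl).2
      linarith only [h1, h2]
    -- CFL-derived bound
    have hμ0 : (0:ℝ) ≤ (Δt/Δz)/Ac i := by positivity
    have hKle : ∀ K : ℝ,
        K ≤ Ac i * (2*Qbound/Amin + M1*Lv + M1*vmax + M2*dmax/Δz) →
        (Δt/Δz)/Ac i * K ≤ 1 := by
      intro K hK
      have h1 := mul_le_mul_of_nonneg_left hK hμ0
      have h2 : (Δt/Δz)/Ac i *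
          (Ac i * (2*Qbound/Amin + M1*Lv + M1*vmax + M2*dmax/Δz)) =
          (Δt * (2*Qbound/Amin + M1*Lv + M1*vmax + M2*dmax/Δz))/Δz := by
        field_simp
      have h3 : (Δt * (2*Qbound/Amin + M1*Lv + M1*vmax + M2*dmax/Δz))/Δz ≤ 1 :=
        (div_le_one hΔz).mpr hCFL
      rw [h2] at h1
      linarith only [h1, h3]
    have hM1a : Ab (i-1) ≤ M1 * Ac i := by
      have h := (hM1 i hi1 hiN).1
      rw [div_le_iff₀ hAci] at h; linarith only [h]
    have hM1b : Ab i ≤ M1 * Ac i := by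
      have h := (hM1 i hi1 hiN).2
      rw [div_le_iff₀ hAci] at h; linarith only [h]
    have hM2i : Ab (i-1) + Ab i ≤ M2 * Ac i := by
      have h := hM2 i hi1 hiN
      rw [div_le_iff₀ hAci] at h; linarith only [h]
    have hAcAmin := hAminc i hi1 hiN
    have hdz0 : (0:ℝ) ≤ dmax/Δz := div_nonneg hdmax0 hΔz.le
    have hp1 : 2*Qbound ≤ Ac i * (2*Qbound/Amin) := by
      have e : Amin * (2*Qbound/Amin) = 2*Qbound := by field_simp
      have h := mul_le_mul_of_nonneg_right hAcAmin
        (div_nonneg (by linarith only [hQb0] : (0:ℝ) ≤ 2*Qbound) hAmin.le : (0:ℝ) ≤ 2*Qbound/Amin)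
      linarith only [e, h]
    have hp3 : (Ab (i-1) + Ab i) * (dmax/Δz) ≤ Ac i * (M2*(dmax/Δz)) := by
      have h := mul_le_mul_of_nonneg_right hM2i hdz0
      linarith only [h]
    have hK1 : 2*Qbound + Ab i * vmax + (Ab (i-1) + Ab i) * (dmax/Δz) ≤
        Ac i * (2*Qbound/Amin + M1*Lv + M1*vmax + M2*dmax/Δz) := by
      have p2 : Ab i * vmax ≤ Ac i * (M1*vmax) := by
        have h := mul_le_mul_of_nonneg_right hM1b hvmax0
        linarith only [h]
      have p4 : 0 ≤ Ac i * (M1*Lv) := mul_nonneg hAci.le (mul_nonneg hM10 hLv0)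
      ring_nf at hp1 hp3 p2 p4 ⊢
      linarith only [hp1, p2, hp3, p4]
    have hK2 : 2*Qbound + Ab (i-1) * Lv + (Ab (i-1) + Ab i) * (dmax/Δz) ≤
        Ac i * (2*Qbound/Amin + M1*Lv + M1*vmax + M2*dmax/Δz) := by
      have p2 : Ab (i-1) * Lv ≤ Ac i * (M1*Lv) := by
        have h := mul_le_mul_of_nonneg_right hM1a hLv0
        linarith only [h]
      have p4 : 0 ≤ Ac i * (M1*vmax) := mul_nonneg hAci.le (mul_nonneg hM10 hvmax0)
      ring_nf at hp1 hp3 p2 p4 ⊢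
      linarith only [hp1, p2, hp3, p4]
    have hKB1 := hKle _ hK1
    have hKB2 := hKle _ hK2
    -- source nonnegativity
    have hδ01 : 0 ≤ δ i ∧ δ i ≤ 1 := by rw [hδ i]; split <;> norm_num
    have hS0 : 0 ≤ QF n * φF n * δ i :=
      mul_nonneg (mul_nonneg (hQF n) (hφF n).1) hδ01.1
    have hfl := hflux n i hi1 hiN
    rw [Set.mem_Icc, hup]
    constructor
    · -- lower bound
      have t1 : 0 ≤ a * Qp0 := mul_nonneg ha0 hQp0a
      have t2 : -(b*Qbound) ≤ b * Qm0 := by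
        have h := mul_le_mul_of_nonneg_left hQm0b hb0
        linarith only [h]
      have t3 : 0 ≤ B0 * (a * v b) := mul_nonneg hB0a (mul_nonneg ha0 hvb0)
      have t4 : B0 * D b / Δz ≤ Ab (i-1) * (dmax * b) / Δz := by
        have h1 : B0 * D b ≤ B0 * (dmax*b) := mul_le_mul_of_nonneg_left hDbu hB0a
        have h2 : B0 * (dmax*b) ≤ Ab (i-1) * (dmax*b) :=
          mul_le_mul_of_nonneg_right hB0b (mul_nonneg hdmax0 hb0)
        exact div_le_div_of_nonneg_right (by linarith only [h1, h2]) hΔz.le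
      have t4' : 0 ≤ B0 * D a / Δz := div_nonneg (mul_nonneg hB0a hDa0) hΔz.le
      have t5 : b * Qp1 ≤ b * Qbound := mul_le_mul_of_nonneg_left hQp1b hb0
      have t6 : c * Qm1 ≤ 0 := by
        have h := mul_le_mul_of_nonneg_left hQm1a hc0
        simpa using h
      have t7 : B1 * (b * v c) ≤ Ab i * (b * vmax) := by
        have h1 : b * v c ≤ b * vmax := mul_le_mul_of_nonneg_left hvcmax hb0
        have h2 : B1 * (b*v c) ≤ B1 * (b*vmax) := mul_le_mul_of_nonneg_left h1 hB1a
        have h3 : B1 * (b*vmax) ≤ Ab i * (b*vmax) :=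
          mul_le_mul_of_nonneg_right hB1b (mul_nonneg hb0 hvmax0)
        linarith only [h2, h3]
      have t8 : B1 * D b / Δz ≤ Ab i * (dmax * b) / Δz := by
        have h1 : B1 * D b ≤ B1 * (dmax*b) := mul_le_mul_of_nonneg_left hDbu hB1a
        have h2 : B1 * (dmax*b) ≤ Ab i * (dmax*b) :=
          mul_le_mul_of_nonneg_right hB1b (mul_nonneg hdmax0 hb0)
        exact div_le_div_of_nonneg_right (by linarith only [h1, h2]) hΔz.le
      have t8' : 0 ≤ B1 * D c / Δz := div_nonneg (mul_nonneg hB1a hDc0) hΔz.le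
      have hElow : -(b * (2*Qbound + Ab i * vmax + (Ab (i-1) + Ab i) * (dmax/Δz))) ≤
          (a * Qp0 + b * Qm0 + B0 * (a * v b - (D b - D a)/Δz))
          - (b * Qp1 + c * Qm1 + B1 * (b * v c - (D c - D b)/Δz))
          + QF n * φF n * δ i := by
        have e1 : B0 * (a * v b - (D b - D a)/Δz) =
            B0 * (a * v b) - B0 * D b / Δz + B0 * D a / Δz := by ring
        have e2 : B1 * (b * v c - (D c - D b)/Δz) =
            B1 * (b * v c) - B1 * D c / Δz + B1 * D b / Δz := by ring
        rw [e1, e2]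
        have erhs : -(b * (2*Qbound + Ab i * vmax + (Ab (i-1) + Ab i) * (dmax/Δz))) =
            -(b*Qbound) - b*Qbound - Ab i * (b*vmax)
            - Ab (i-1) * (dmax*b)/Δz - Ab i * (dmax*b)/Δz := by
          field_simp
          ring
        rw [erhs]
        ring_nf at t1 t2 t3 t4 t4' t5 t6 t7 t8 t8' hS0 ⊢
        linarith only [t1, t2, t3, t4, t4', t5, t6, t7, t8, t8', hS0]
      have h1 := mul_le_mul_of_nonneg_left hElow hμ0
      have h2 : b * ((Δt/Δz)/Ac i *
          (2*Qbound + Ab i * vmax + (Ab (i-1) + Ab i) * (dmax/Δz))) ≤ b * 1 :=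
        mul_le_mul_of_nonneg_left hKB1 hb0
      ring_nf at h1 h2 ⊢
      linarith only [h1, h2]
    · -- upper bound
      have u1 : a * Qp0 ≤ Qp0 := by
        have h := mul_le_mul_of_nonneg_right ha1 hQp0a
        linarith only [h]
      have u2 : b * Qm0 ≤ Qm0 + (1-b)*Qbound := by
        have h := mul_le_mul_of_nonneg_left
          (by linarith only [hQm0b] : -Qm0 ≤ Qbound) (by linarith only [hb1] : (0:ℝ) ≤ 1-b)
        linarith only [h]
      have u3 : B0 * (a * v b) ≤ Ab (i-1) * (Lv*(1-b)) := by
        have h1 : a * v b ≤ v b := by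
          have h := mul_le_mul_of_nonneg_right ha1 hvb0
          linarith only [h]
        have h2 : a * v b ≤ Lv*(1-b) := h1.trans hvbLip
        have h3 : B0 * (a*v b) ≤ B0 * (Lv*(1-b)) := mul_le_mul_of_nonneg_left h2 hB0a
        have h4 : B0 * (Lv*(1-b)) ≤ Ab (i-1) * (Lv*(1-b)) :=
          mul_le_mul_of_nonneg_right hB0b (mul_nonneg hLv0 (by linarith only [hb1]))
        linarith only [h3, h4]
      have u4 : B0 * (D a - D b) / Δz ≤ Ab (i-1) * (dmax*(1-b)) / Δz := by
        have h3 : B0 * (D a - D b) ≤ B0 * (dmax*(1-b)) :=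
          mul_le_mul_of_nonneg_left hDab hB0a
        have h4 : B0 * (dmax*(1-b)) ≤ Ab (i-1) * (dmax*(1-b)) :=
          mul_le_mul_of_nonneg_right hB0b (mul_nonneg hdmax0 (by linarith only [hb1]))
        exact div_le_div_of_nonneg_right (by linarith only [h3, h4]) hΔz.le
      have u5 : -(b * Qp1) ≤ -Qp1 + (1-b)*Qbound := by
        have h := mul_le_mul_of_nonneg_left hQp1b (by linarith only [hb1] : (0:ℝ) ≤ 1-b)
        linarith only [h]
      have u6 : Qm1 ≤ c * Qm1 := by
        have h : 0 ≤ (1 - c) * (-Qm1) :=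
          mul_nonneg (by linarith only [hc1]) (by linarith only [hQm1a])
        linarith only [h]
      have u7 : 0 ≤ B1 * (b * v c) := mul_nonneg hB1a (mul_nonneg hb0 hvc0)
      have u8 : B1 * (D c - D b) / Δz ≤ Ab i * (dmax*(1-b)) / Δz := by
        have h3 : B1 * (D c - D b) ≤ B1 * (dmax*(1-b)) :=
          mul_le_mul_of_nonneg_left hDcb hB1a
        have h4 : B1 * (dmax*(1-b)) ≤ Ab i * (dmax*(1-b)) :=
          mul_le_mul_of_nonneg_right hB1b (mul_nonneg hdmax0 (by linarith only [hb1]))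
        exact div_le_div_of_nonneg_right (by linarith only [h3, h4]) hΔz.le
      have hEup : (a * Qp0 + b * Qm0 + B0 * (a * v b - (D b - D a)/Δz))
          - (b * Qp1 + c * Qm1 + B1 * (b * v c - (D c - D b)/Δz))
          + QF n * φF n * δ i ≤
          (Q n (i-1) - Q n i + QF n * φF n * δ i) +
          (1-b) * (2*Qbound + Ab (i-1) * Lv + (Ab (i-1) + Ab i) * (dmax/Δz)) := by
        have e1 : B0 * (a * v b - (D b - D a)/Δz) =
            B0 * (a * v b) + B0 * (D a - D b) / Δz := by ring
        have e2 : B1 * (b * v c - (D c - D b)/Δz) =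
            B1 * (b * v c) - B1 * (D c - D b) / Δz := by ring
        rw [e1, e2]
        have erhs : (1-b) * (2*Qbound + Ab (i-1) * Lv + (Ab (i-1) + Ab i) * (dmax/Δz)) =
            (1-b)*Qbound + (1-b)*Qbound + Ab (i-1) * (Lv*(1-b))
            + Ab (i-1) * (dmax*(1-b))/Δz + Ab i * (dmax*(1-b))/Δz := by
          field_simp
          ring
        rw [erhs]
        ring_nf at u1 u2 u3 u4 u5 u6 u7 u8 hm0 hm1 ⊢
        linarith only [u1, u2, u3, u4, u5, u6, u7, u8, hm0, hm1]
      have h1 := mul_le_mul_of_nonneg_left hEup hμ0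
      have h2 : ((Δt/Δz)/Ac i) * (Q n (i-1) - Q n i + QF n * φF n * δ i) ≤ 0 := by
        have h := mul_le_mul_of_nonneg_left hfl hμ0
        simpa using h
      have h3 : (1-b) * ((Δt/Δz)/Ac i *
          (2*Qbound + Ab (i-1) * Lv + (Ab (i-1) + Ab i) * (dmax/Δz))) ≤ (1-b) * 1 :=
        mul_le_mul_of_nonneg_left hKB2 (by linarith only [hb1])
      ring_nf at h1 h2 h3 ⊢
      linarith only [h1, h2, h3]
end
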